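/- An undirected graph is Markov equivalent to some directed acyclic graph if and only if it is chordal. -/

import Mathlib

/-- A loopless mixed graph with three kinds of edges: lines (undirected),
arrows (directed, `arrow i j` means `i → j`), and arcs (bidirected). -/
structure MixedGraph (V : Type*) where
  line : V → V → Prop
  arrow : V → V → Prop
  arc : V → V → Prop
  line_symm : ∀ i j, line i j → line j i
  arc_symm : ∀ i j, arc i j → arc j i
  line_irrefl : ∀ i, ¬ line i i
  arrow_irrefl : ∀ i, ¬ arrow i i
  arc_irrefl : ∀ i, ¬ arc i i

namespace MixedGraph

variable {V : Type*}

/-- `i` and `j` are adjacent (joined by some edge). -/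
def adj (G : MixedGraph V) (i j : V) : Prop :=
  G.line i j ∨ G.arrow i j ∨ G.arrow j i ∨ G.arc i j

/-- There is an edge between `i` and `j` with an arrowhead pointing at `j`. -/
def headAt (G : MixedGraph V) (i j : V) : Prop :=
  G.arrow i j ∨ G.arc i j

/-- `j` is a collider on the V-configuration `⟨i, j, k⟩`. -/
def collider (G : MixedGraph V) (i j k : V) : Prop :=
  G.headAt i j ∧ G.headAt k j

/-- `i` is an ancestor of `j` (a direction-preserving path of arrows from `i` to `j`). -/
def anc (G : MixedGraph V) (i j : V) : Prop :=
  Relation.ReflTransGen G.arrow i j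

/-- A path: a list of pairwise distinct nodes, consecutive ones adjacent. -/
def isPath (G : MixedGraph V) (p : List V) : Prop :=
  p.Nodup ∧ List.Chain' G.adj p

/-- Inner-node condition for an `m`-connecting path given `C`:
every collider inner node is in `C` or an ancestor of a node of `C`,
every non-collider inner node is outside `C`. -/
def innerOK (G : MixedGraph V) (C : Set V) : List V → Prop
  | a :: b :: c :: rest =>
      ((G.collider a b c → b ∈ C ∨ ∃ x ∈ C, G.anc b x) ∧
        (¬ G.collider a b c → b ∉ C)) ∧
      innerOK G C (b :: c :: rest)
  | _ => True

/-- `p` is an `m`-connecting path between `i` and `j` given `C`. -/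
def mConnecting (G : MixedGraph V) (C : Set V) (i j : V) (p : List V) : Prop :=
  G.isPath p ∧ 2 ≤ p.length ∧ p.head? = some i ∧ p.getLast? = some j ∧
    G.innerOK C p

/-- `A` is `m`-separated from `B` given `C`. -/
def mSep (G : MixedGraph V) (A B C : Set V) : Prop :=
  ¬ ∃ (i j : V) (p : List V), i ∈ A ∧ j ∈ B ∧ G.mConnecting C i j p

/-- Two mixed graphs on the same node set are Markov equivalent if they induce
exactly the same `m`-separation statements among disjoint sets. -/
def markovEquiv (G₁ G₂ : MixedGraph V) : Prop :=
  ∀ A B C : Set V, Disjoint A B → Disjoint A C → Disjoint B C →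
    (G₁.mSep A B C ↔ G₂.mSep A B C)

/-- An undirected graph: only line edges. -/
def isUG (G : MixedGraph V) : Prop :=
  (∀ i j, ¬ G.arrow i j) ∧ (∀ i j, ¬ G.arc i j)

/-- A bidirected graph: only arc edges. -/
def isBG (G : MixedGraph V) : Prop :=
  (∀ i j, ¬ G.arrow i j) ∧ (∀ i j, ¬ G.line i j)

/-- A directed acyclic graph: only arrows, and no directed cycle. -/
def isDAG (G : MixedGraph V) : Prop :=
  (∀ i j, ¬ G.line i j) ∧ (∀ i j, ¬ G.arc i j) ∧ ∀ i, ¬ Relation.TransGen G.arrow i i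

/-- An ancestral graph: no node is an ancestor of one of its parents or spouses,
and no arrowhead points at a node having a neighbour. -/
def isAncestral (G : MixedGraph V) : Prop :=
  (∀ i j, (G.arrow j i ∨ G.arc j i) → ¬ G.anc i j) ∧
  (∀ i j k, G.line i j → ¬ G.headAt k i)

/-- Maximality: every pair of distinct non-adjacent nodes can be `m`-separated. -/
def isMaximal (G : MixedGraph V) : Prop :=
  ∀ i j, i ≠ j → ¬ G.adj i j → ∃ C : Set V, i ∉ C ∧ j ∉ C ∧ G.mSep {i} {j} C

/-- A maximal ancestral graph. -/
def isMAG (G : MixedGraph V) : Prop :=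
  G.isAncestral ∧ G.isMaximal

/-- Two graphs have the same skeleton. -/
def sameSkeleton (G₁ G₂ : MixedGraph V) : Prop :=
  ∀ i j, G₁.adj i j ↔ G₂.adj i j

/-- An unshielded collider V-configuration `⟨i, j, k⟩`. -/
def unshieldedCollider (G : MixedGraph V) (i j k : V) : Prop :=
  G.collider i j k ∧ i ≠ k ∧ ¬ G.adj i k

end MixedGraph

/-- `p` is a chordless cycle (length `≥ 4`) for the adjacency relation `adj`:
consecutive nodes (cyclically) are adjacent and no other pairs are adjacent. -/
def chordlessCycleList {V : Type*} (adj : V → V → Prop) (p : List V) : Prop :=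
  4 ≤ p.length ∧ p.Nodup ∧ List.Chain' adj p ∧
  (∀ a b, p.head? = some a → p.getLast? = some b → adj b a) ∧
  ∀ m n a b, m + 2 ≤ n → n < p.length → ¬(m = 0 ∧ n = p.length - 1) →
    p[m]? = some a → p[n]? = some b → ¬ adj a b

/-- `adj` is chordal: it has no chordless cycle on four or more nodes. -/
def chordalRel {V : Type*} (adj : V → V → Prop) : Prop :=
  ¬ ∃ p, chordlessCycleList adj p

namespace MixedGraph

variable {V : Type*} {G D : MixedGraph V} {C : Set V} {i j : V}

lemma adj_irrefl' (G : MixedGraph V) (i : V) : ¬ G.adj i i := by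
  rintro (h | h | h | h)
  exacts [G.line_irrefl i h, G.arrow_irrefl i h, G.arrow_irrefl i h, G.arc_irrefl i h]

lemma adj_symm' (G : MixedGraph V) {i j : V} (h : G.adj i j) : G.adj j i := by
  rcases h with h | h | h | h
  · exact Or.inl (G.line_symm _ _ h)
  · exact Or.inr (Or.inr (Or.inl h))
  · exact Or.inr (Or.inl h)
  · exact Or.inr (Or.inr (Or.inr (G.arc_symm _ _ h)))

lemma ne_of_adj (h : G.adj i j) : i ≠ j := fun e => G.adj_irrefl' j (e ▸ h)

/-- The inner condition at one triple. -/
def okAt (G : MixedGraph V) (C : Set V) (a b c : V) : Prop :=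
  (G.collider a b c → b ∈ C ∨ ∃ x ∈ C, G.anc b x) ∧
    (¬ G.collider a b c → b ∉ C)

lemma innerOK_iff_get (G : MixedGraph V) (C : Set V) :
    ∀ (p : List V), G.innerOK C p ↔
      ∀ t (h : t + 2 < p.length), G.okAt C p[t] p[t+1] p[t+2]
  | [] => by simp [innerOK]
  | [a] => by simp [innerOK]
  | [a, b] => by
      simp only [innerOK, List.length_cons, List.length_nil]
      constructor
      · intro _ t ht; omega
      · intro _; trivial
  | a :: b :: c :: rest => by
      have ih := innerOK_iff_get G C (b :: c :: rest)
      constructor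
      · rintro ⟨h0, hrest⟩ t ht
        match t with
        | 0 => exact h0
        | (s+1) =>
          have := (ih.1 hrest) s (by simpa [Nat.succ_lt_succ_iff] using ht)
          simpa using this
      · intro h
        refine ⟨h 0 (by simp), ih.2 ?_⟩
        intro s hs
        have := h (s+1) (by simp at hs ⊢; omega)
        simpa using this

lemma mConnecting_edge (h : G.adj i j) : G.mConnecting C i j [i, j] := by
  have hne : i ≠ j := ne_of_adj h
  refine ⟨⟨by simp [hne], by simp [List.Chain', h]⟩, by simp, rfl, rfl, trivial⟩

lemma not_mSep_of_adj (h : G.adj i j) : ¬ G.mSep {i} {j} C := fun hs =>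
  hs ⟨i, j, [i, j], rfl, rfl, mConnecting_edge h⟩

lemma isUG.not_headAt (hG : G.isUG) (i j : V) : ¬ G.headAt i j := by
  rintro (h | h)
  exacts [hG.1 _ _ h, hG.2 _ _ h]

lemma head_getElem {p : List V} (h : p.head? = some i) :
    ∃ hl : 0 < p.length, p[0] = i := by
  rw [List.head?_eq_getElem?, List.getElem?_eq_some_iff] at h
  exact h

lemma getLast_getElem {p : List V} (h : p.getLast? = some j) :
    ∃ hl : p.length - 1 < p.length, p[p.length - 1] = j := by
  rw [List.getLast?_eq_getElem?, List.getElem?_eq_some_iff] at h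
  exact h

lemma chain'_getElem {R : V → V → Prop} {p : List V} (h : List.Chain' R p)
    {t : ℕ} (ht : t + 1 < p.length) : R p[t] p[t+1] := by
  have := List.isChain_iff_getElem.1 h t (by omega)
  simpa using this

/-- In an undirected graph, two distinct non-adjacent nodes are separated
by everything else. -/
lemma mSep_of_ug (hG : G.isUG) (hne : i ≠ j) (hna : ¬ G.adj i j) :
    G.mSep {i} {j} {v | v ≠ i ∧ v ≠ j} := by
  rintro ⟨i', j', p, hi', hj', ⟨⟨hnd, hch⟩, hlen, hhead, hlast, hok⟩⟩
  rw [Set.mem_singleton_iff] at hi' hj'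
  subst hi' hj'
  obtain ⟨h0l, h0⟩ := head_getElem hhead
  obtain ⟨hll, hl⟩ := getLast_getElem hlast
  rcases Nat.lt_or_ge p.length 3 with h3 | h3
  · -- length 2
    have hadj := chain'_getElem hch (t := 0) (by omega)
    have e : p.length - 1 = 0 + 1 := by omega
    have hl? : p[0+1]? = some j' := by
      rw [← e, ← List.getLast?_eq_getElem?]; exact hlast
    have e1 : p[0+1] = j' := by
      obtain ⟨_, h⟩ := List.getElem?_eq_some_iff.1 hl?
      exact h
    rw [h0, e1] at hadj
    exact hna hadj
  · have hok0 := ((innerOK_iff_get G _ p).1 hok) 0 (by omega)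
    have hnc : ¬ G.collider p[0] p[1] p[2] := fun hc => hG.not_headAt _ _ hc.1
    have h1 : p[1] ∉ {v | v ≠ i' ∧ v ≠ j'} := hok0.2 hnc
    simp only [Set.mem_setOf_eq, not_and_or, not_not] at h1
    rcases h1 with h1 | h1
    · rw [← h0] at h1
      have := hnd.getElem_inj_iff.1 h1
      omega
    · rw [← hl] at h1
      have := hnd.getElem_inj_iff.1 h1
      omega

end MixedGraph
namespace MixedGraph

variable {V : Type*} {D : MixedGraph V} {i j : V}

lemma gidx (p : List V) {a b : ℕ} (h : a = b) {ha : a < p.length} :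
    p[a] = p[b]'(h ▸ ha) := by subst h; rfl

lemma isDAG.adj_arrow (hD : D.isDAG) {i j : V} (h : D.adj i j) :
    D.arrow i j ∨ D.arrow j i := by
  rcases h with h | h | h | h
  · exact absurd h (hD.1 _ _)
  · exact Or.inl h
  · exact Or.inr h
  · exact absurd h (hD.2.1 _ _)

lemma isDAG.headAt_arrow (hD : D.isDAG) {i j : V} (h : D.headAt i j) :
    D.arrow i j := by
  rcases h with h | h
  · exact h
  · exact absurd h (hD.2.1 _ _)

lemma anc_extend {a b : V} (har : D.arrow a b) {x : V} (h : D.anc b x) :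
    D.anc a x := Relation.ReflTransGen.head har h

/-- In a DAG, two distinct non-adjacent nodes are `m`-separated by the set of
their proper ancestors. -/
lemma mSep_of_dag (hD : D.isDAG) (hne : i ≠ j) (hna : ¬ D.adj i j) :
    D.mSep {i} {j} {v | (D.anc v i ∨ D.anc v j) ∧ v ≠ i ∧ v ≠ j} := by
  rintro ⟨i', j', p, hi', hj', ⟨⟨hnd, hch⟩, hlen, hhead, hlast, hok⟩⟩
  rw [Set.mem_singleton_iff] at hi' hj'
  subst hi'; subst hj'
  set C : Set V := {v | (D.anc v i' ∨ D.anc v j') ∧ v ≠ i' ∧ v ≠ j'} with hC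
  set A : V → Prop := fun v => D.anc v i' ∨ D.anc v j' with hA
  obtain ⟨h0l, h0⟩ := head_getElem hhead
  obtain ⟨hll, hl⟩ := getLast_getElem hlast
  have hadj : ∀ t (ht : t + 1 < p.length),
      D.arrow (p[t]'(by omega)) (p[t+1]'(by omega)) ∨
        D.arrow (p[t+1]'(by omega)) (p[t]'(by omega)) :=
    fun t ht => hD.adj_arrow (chain'_getElem hch ht)
  have hok' := (innerOK_iff_get D C p).1 hok
  have hCsub : ∀ v, v ∈ C → A v := fun v hv => hv.1
  have hAext : ∀ {a b : V}, D.arrow a b → A b → A a := by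
    rintro a b har (h | h)
    · exact Or.inl (anc_extend har h)
    · exact Or.inr (anc_extend har h)
  have hcolA : ∀ t (ht : t + 2 < p.length),
      D.collider (p[t]'(by omega)) (p[t+1]'(by omega)) (p[t+2]'(by omega)) →
        A (p[t+1]'(by omega)) := by
    intro t ht hc
    rcases (hok' t ht).1 hc with hmem | ⟨x, hx, hax⟩
    · exact hCsub _ hmem
    · rcases hCsub _ hx with h | h
      · exact Or.inl (hax.trans h)
      · exact Or.inr (hax.trans h)
  -- forward claim
  have claim_F : ∀ d t (h : t + 1 + d + 1 = p.length),
      D.arrow (p[t]'(by omega)) (p[t+1]'(by omega)) → A (p[t]'(by omega)) := by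
    intro d
    induction d with
    | zero =>
      intro t h har
      have e : t + 1 = p.length - 1 := by omega
      rw [gidx p e, hl] at har
      exact Or.inr (Relation.ReflTransGen.single har)
    | succ d ih =>
      intro t h har
      have ht2 : t + 2 < p.length := by omega
      by_cases hc : D.collider p[t] p[t+1] p[t+2]
      · exact hAext har (hcolA t ht2 hc)
      · have hhl : D.headAt p[t] p[t+1] := Or.inl har
        have hnr : ¬ D.headAt p[t+2] p[t+1] := fun hh => hc ⟨hhl, hh⟩
        have har2 : D.arrow p[t+1] p[t+2] := by
          rcases hadj (t+1) (by omega) with h' | h'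
          · exact h'
          · exact absurd (Or.inl h') hnr
        have := ih (t+1) (by omega) (by
          have e : t + 1 + 1 = t + 2 := rfl
          exact har2)
        exact hAext har this
  -- backward claim
  have claim_B : ∀ t (h : t + 1 < p.length),
      D.arrow (p[t+1]'(by omega)) (p[t]'(by omega)) → A (p[t+1]'(by omega)) := by
    intro t
    induction t using Nat.strong_induction_on with
    | _ t IH =>
      intro h har
      rcases Nat.eq_zero_or_pos t with rfl | hpos
      · rw [h0] at har
        exact Or.inl (Relation.ReflTransGen.single har)
      · have ht2 : (t-1) + 2 < p.length := by omega
        have g1 : p[(t-1)+1]'(by omega) = p[t]'(by omega) := gidx p (by omega)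
        have g2 : p[(t-1)+2]'(by omega) = p[t+1]'(by omega) := gidx p (by omega)
        by_cases hc : D.collider (p[t-1]'(by omega)) p[t] p[t+1]
        · have hc' : D.collider (p[t-1]'(by omega)) (p[(t-1)+1]'(by omega))
              (p[(t-1)+2]'(by omega)) := by rw [g1, g2]; exact hc
          have := hcolA (t-1) ht2 hc'
          rw [g1] at this
          exact hAext har this
        · have hhr : D.headAt p[t+1] p[t] := Or.inl har
          have hnl : ¬ D.headAt (p[t-1]'(by omega)) p[t] := fun hh => hc ⟨hh, hhr⟩
          have har2 : D.arrow p[t] (p[t-1]'(by omega)) := by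
            rcases hadj (t-1) (by omega) with h' | h'
            · rw [g1] at h'; exact absurd (Or.inl h') hnl
            · rw [g1] at h'; exact h'
          have := IH (t-1) (by omega) (by omega) (by rw [g1]; exact har2)
          rw [g1] at this
          exact hAext har this
  -- membership of inner nodes in C given A
  have hmemC : ∀ t (h1 : 1 ≤ t) (h2 : t + 1 < p.length), A (p[t]'(by omega)) →
      (p[t]'(by omega)) ∈ C := by
    intro t h1 h2 hAt
    refine ⟨hAt, ?_, ?_⟩
    · intro e; rw [← h0] at e
      have := hnd.getElem_inj_iff.1 e; omega
    · intro e; rw [← hl] at e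
      have := hnd.getElem_inj_iff.1 e; omega
  -- every inner node is a collider
  have inner_col : ∀ t (h1 : 1 ≤ t) (h2 : t + 1 < p.length),
      D.collider (p[t-1]'(by omega)) (p[t]'(by omega)) (p[t+1]'(by omega)) := by
    intro t h1 h2
    by_contra hc
    have ht2 : (t-1) + 2 < p.length := by omega
    have g1 : p[(t-1)+1]'(by omega) = p[t]'(by omega) := gidx p (by omega)
    have g2 : p[(t-1)+2]'(by omega) = p[t+1]'(by omega) := gidx p (by omega)
    have hokt := hok' (t-1) ht2
    rw [g1, g2] at hokt
    have hnotC : p[t] ∉ C := hokt.2 hc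
    have hAt : A p[t] := by
      by_cases hhl : D.headAt (p[t-1]'(by omega)) p[t]
      · -- then right side is not a head, so arrow out to the right
        have hnr : ¬ D.headAt p[t+1] p[t] := fun hh => hc ⟨hhl, hh⟩
        have har2 : D.arrow p[t] p[t+1] := by
          rcases hadj t (by omega) with h' | h'
          · exact h'
          · exact absurd (Or.inl h') hnr
        have := claim_F (p.length - t - 2) t (by omega) har2
        exact this
      · -- arrow out to the left
        have har2 : D.arrow p[t] (p[t-1]'(by omega)) := by
          rcases hadj (t-1) (by omega) with h' | h'
          · rw [g1] at h'; exact absurd (Or.inl h') hhl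
          · rw [g1] at h'; exact h'
        have := claim_B (t-1) (by omega) (by rw [g1]; exact har2)
        rw [g1] at this
        exact this
    exact hnotC (hmemC t h1 h2 hAt)
  -- case on length
  rcases Nat.lt_or_ge p.length 3 with h3 | h3
  · have hadj0 := chain'_getElem hch (t := 0) (by omega)
    have e : 0 + 1 = p.length - 1 := by omega
    rw [gidx p e, hl, h0] at hadj0
    exact hna hadj0
  rcases Nat.lt_or_ge p.length 4 with h4 | h4
  · -- length 3
    have hc := inner_col 1 le_rfl (by omega)
    have ha1 : D.arrow (p[0]'(by omega)) p[1] := hD.headAt_arrow hc.1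
    have ha2 : D.arrow (p[1+1]'(by omega)) p[1] := hD.headAt_arrow hc.2
    have g2 : p[1+1]'(by omega) = p[p.length - 1] := gidx p (by omega)
    rw [g2, hl] at ha2
    rw [h0] at ha1
    have hA1 : A p[1] := by
      have g0 : (1:ℕ) - 1 = 0 := rfl
      have hc' := hc
      exact hcolA 0 (by omega) (by
        have gg : p[0+1]'(by omega) = p[1] := gidx p rfl
        have gg2 : p[0+2]'(by omega) = p[1+1]'(by omega) := gidx p rfl
        rw [gg, gg2, g2, hl]
        rw [h0] at hc' ⊢
        exact ⟨Or.inl ha1, Or.inl ha2⟩)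
    rcases hA1 with h | h
    · exact hD.2.2 i' (Relation.TransGen.head' ha1 h)
    · exact hD.2.2 j' (Relation.TransGen.head' ha2 h)
  · -- length ≥ 4 : two consecutive colliders impossible
    have hc1 := inner_col 1 le_rfl (by omega)
    have hc2 := inner_col 2 (by omega) (by omega)
    have ha1 : D.arrow (p[1+1]'(by omega)) p[1] := hD.headAt_arrow hc1.2
    have g1 : p[2-1]'(by omega) = p[1] := gidx p rfl
    rw [g1] at hc2
    have ha2 : D.arrow p[1] (p[2]'(by omega)) := hD.headAt_arrow hc2.1
    have g2 : p[1+1]'(by omega) = p[2]'(by omega) := gidx p rfl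
    rw [g2] at ha1
    exact hD.2.2 p[1] (Relation.TransGen.head ha2 (Relation.TransGen.single ha1))
  
end MixedGraph
section Sec3

open MixedGraph

variable {V : Type*}

lemma exists_rel_maximal [DecidableEq V] (r : V → V → Prop)
    (htrans : Transitive r) (hirr : ∀ x, ¬ r x x) (s : Finset V) (hs : s.Nonempty) :
    ∃ m ∈ s, ∀ x ∈ s, ¬ r m x := by
  classical
  obtain ⟨n, hn⟩ : ∃ n, s.card = n := ⟨_, rfl⟩
  induction n using Nat.strong_induction_on generalizing s with
  | _ n IH =>
    obtain ⟨a, ha⟩ := hs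
    by_cases hgood : ∀ x ∈ s, ¬ r a x
    · exact ⟨a, ha, hgood⟩
    · push_neg at hgood
      obtain ⟨x0, hx0, hr0⟩ := hgood
      set s' := s.filter (fun y => r a y) with hs'
      have hsub : s' ⊆ s := Finset.filter_subset _ _
      have hane : a ∉ s' := by
        simp only [hs', Finset.mem_filter]
        exact fun h => hirr a h.2
      have hlt : s'.card < n := by
        rw [← hn]
        exact Finset.card_lt_card ⟨hsub, fun hss => hane (hss ha)⟩
      have hs'ne : s'.Nonempty := ⟨x0, by simp [hs', hx0, hr0]⟩
      obtain ⟨m, hm, hmax⟩ := IH s'.card hlt s' hs'ne rfl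
      refine ⟨m, hsub hm, fun x hx hrmx => ?_⟩
      have ham : r a m := (Finset.mem_filter.1 hm).2
      have : x ∈ s' := by
        simp only [hs', Finset.mem_filter]
        exact ⟨hx, htrans ham hrmx⟩
      exact hmax x this hrmx

lemma skeleton_of_equiv (G D : MixedGraph V) (hG : G.isUG) (hD : D.isDAG)
    (heq : G.markovEquiv D) : ∀ i j, G.adj i j ↔ D.adj i j := by
  intro i j
  constructor
  · intro h
    have hne := ne_of_adj h
    by_contra hna
    have hsep := mSep_of_dag hD hne hna
    have hd1 : Disjoint ({i} : Set V) {j} := by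
      rw [Set.disjoint_left]; rintro a ha hb
      rw [Set.mem_singleton_iff] at ha hb; exact hne (ha ▸ hb ▸ rfl)
    have hd2 : Disjoint ({i} : Set V)
        {v | (D.anc v i ∨ D.anc v j) ∧ v ≠ i ∧ v ≠ j} := by
      rw [Set.disjoint_left]; rintro a ha hb
      rw [Set.mem_singleton_iff] at ha; subst ha; exact hb.2.1 rfl
    have hd3 : Disjoint ({j} : Set V)
        {v | (D.anc v i ∨ D.anc v j) ∧ v ≠ i ∧ v ≠ j} := by
      rw [Set.disjoint_left]; rintro a ha hb
      rw [Set.mem_singleton_iff] at ha; subst ha; exact hb.2.2 rfl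
    exact not_mSep_of_adj h ((heq _ _ _ hd1 hd2 hd3).2 hsep)
  · intro h
    have hne := ne_of_adj (G := D) h
    by_contra hna
    have hsep := mSep_of_ug hG hne hna
    have hd1 : Disjoint ({i} : Set V) {j} := by
      rw [Set.disjoint_left]; rintro a ha hb
      rw [Set.mem_singleton_iff] at ha hb; exact hne (ha ▸ hb ▸ rfl)
    have hd2 : Disjoint ({i} : Set V) {v | v ≠ i ∧ v ≠ j} := by
      rw [Set.disjoint_left]; rintro a ha hb
      rw [Set.mem_singleton_iff] at ha; subst ha; exact hb.1 rfl
    have hd3 : Disjoint ({j} : Set V) {v | v ≠ i ∧ v ≠ j} := by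
      rw [Set.disjoint_left]; rintro a ha hb
      rw [Set.mem_singleton_iff] at ha; subst ha; exact hb.2 rfl
    exact not_mSep_of_adj h ((heq _ _ _ hd1 hd2 hd3).1 hsep)

lemma final_contra (G D : MixedGraph V) (hG : G.isUG)
    (heq : G.markovEquiv D) {u m v : V}
    (hu : D.arrow u m) (hv : D.arrow v m) (hneuv : u ≠ v) (hnauv : ¬ G.adj u v)
    (hmu : m ≠ u) (hmv : m ≠ v) : False := by
  have hsep := mSep_of_ug hG hneuv hnauv
  have hd1 : Disjoint ({u} : Set V) {v} := by
    rw [Set.disjoint_left]; rintro a ha hb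
    rw [Set.mem_singleton_iff] at ha hb; exact hneuv (ha ▸ hb ▸ rfl)
  have hd2 : Disjoint ({u} : Set V) {w | w ≠ u ∧ w ≠ v} := by
    rw [Set.disjoint_left]; rintro a ha hb
    rw [Set.mem_singleton_iff] at ha; subst ha; exact hb.1 rfl
  have hd3 : Disjoint ({v} : Set V) {w | w ≠ u ∧ w ≠ v} := by
    rw [Set.disjoint_left]; rintro a ha hb
    rw [Set.mem_singleton_iff] at ha; subst ha; exact hb.2 rfl
  have hsepD := (heq _ _ _ hd1 hd2 hd3).1 hsep
  refine hsepD ⟨u, v, [u, m, v], rfl, rfl, ?_, by simp, rfl, by simp, ?_⟩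
  · refine ⟨by simp [hmu.symm, hmv, hneuv, Ne], ?_⟩
    refine List.isChain_cons_cons.2 ⟨Or.inr (Or.inl hu), ?_⟩
    refine List.isChain_cons_cons.2 ⟨Or.inr (Or.inr (Or.inl hv)), ?_⟩
    simp
  · exact ⟨⟨fun _ => Or.inl ⟨hmu, hmv⟩,
      fun hnc => absurd ⟨Or.inl hu, Or.inl hv⟩ hnc⟩, trivial⟩

theorem chordal_of_equiv (G D : MixedGraph V) (hG : G.isUG) (hD : D.isDAG)
    (heq : G.markovEquiv D) : chordalRel G.adj := by
  rintro ⟨p, h4, hnd, hch, hwrap, hchord⟩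
  classical
  have hskel := skeleton_of_equiv G D hG hD heq
  have hpl : 0 < p.length := by omega
  obtain ⟨m, hmS, hmax⟩ := exists_rel_maximal (Relation.TransGen D.arrow)
    (fun a b c => Relation.TransGen.trans) hD.2.2 p.toFinset
    ⟨p[0], by rw [List.mem_toFinset]; exact List.getElem_mem _⟩
  rw [List.mem_toFinset] at hmS
  obtain ⟨t, ht, hpt⟩ := List.mem_iff_getElem.1 hmS
  -- basic facts
  have hchD : ∀ s (hs : s + 1 < p.length),
      D.adj (p[s]'(by omega)) (p[s+1]'(by omega)) :=
    fun s hs => (hskel _ _).1 (chain'_getElem hch hs)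
  have hwrapG : G.adj p[p.length - 1] p[0] := by
    refine hwrap _ _ ?_ ?_
    · rw [List.head?_eq_getElem?]; exact List.getElem?_eq_getElem hpl
    · rw [List.getLast?_eq_getElem?]; exact List.getElem?_eq_getElem (by omega)
  have harr : ∀ x, x ∈ p → D.adj x m → D.arrow x m := by
    intro x hx hadj
    rcases hD.adj_arrow hadj with h | h
    · exact h
    · exact absurd (Relation.TransGen.single h)
        (hmax x (List.mem_toFinset.2 hx))
  have hnadj : ∀ (s u : ℕ) (hs : s < p.length) (hu : u < p.length),
      s + 2 ≤ u → ¬(s = 0 ∧ u = p.length - 1) → ¬ G.adj p[s] p[u] := by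
    intro s u hs hu h2 hne
    exact hchord s u _ _ h2 hu hne (List.getElem?_eq_getElem hs)
      (List.getElem?_eq_getElem hu)
  subst hpt
  rcases Nat.eq_zero_or_pos t with rfl | htpos
  · -- t = 0 : neighbours p[1] and p[p.length - 1]
    refine final_contra G D hG heq (u := p[1]'(by omega)) (m := p[0]'(by omega)) (v := p[p.length-1])
      ?_ ?_ ?_ ?_ ?_ ?_
    · exact harr _ (List.getElem_mem _) (D.adj_symm' (hchD 0 (by omega)))
    · exact harr _ (List.getElem_mem _) ((hskel _ _).1 hwrapG)
    · intro e; have := hnd.getElem_inj_iff.1 e; omega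
    · exact fun h => hnadj 1 (p.length - 1) (by omega) (by omega) (by omega)
        (by omega) h
    · intro e; have := hnd.getElem_inj_iff.1 e; omega
    · intro e; have := hnd.getElem_inj_iff.1 e; omega
  rcases Nat.lt_or_ge t (p.length - 1) with htl | htl
  · -- middle
    have g1 : p[(t-1)+1]'(by omega) = p[t] := gidx p (by omega)
    refine final_contra G D hG heq (u := p[t-1]'(by omega)) (m := p[t]'(by omega)) (v := p[t+1]'(by omega))
      ?_ ?_ ?_ ?_ ?_ ?_
    · have := hchD (t-1) (by omega)
      rw [g1] at this
      exact harr _ (List.getElem_mem _) this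
    · have := hchD t (by omega)
      exact harr _ (List.getElem_mem _) (D.adj_symm' this)
    · intro e; have := hnd.getElem_inj_iff.1 e; omega
    · exact fun h => hnadj (t-1) (t+1) (by omega) (by omega) (by omega)
        (by omega) h
    · intro e; have := hnd.getElem_inj_iff.1 e; omega
    · intro e; have := hnd.getElem_inj_iff.1 e; omega
  · -- t = p.length - 1
    have hte : t = p.length - 1 := by omega
    subst hte
    have g1 : p[(p.length-2)+1]'(by omega) = p[p.length-1] := gidx p (by omega)
    refine final_contra G D hG heq (u := p[p.length-2]'(by omega)) (m := p[p.length-1]'(by omega)) (v := p[0])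
      ?_ ?_ ?_ ?_ ?_ ?_
    · have := hchD (p.length-2) (by omega)
      rw [g1] at this
      exact harr _ (List.getElem_mem _) this
    · exact harr _ (List.getElem_mem _) (D.adj_symm' ((hskel _ _).1 hwrapG))
    · intro e; have := hnd.getElem_inj_iff.1 e; omega
    · exact fun h => hnadj 0 (p.length - 2) (by omega) (by omega) (by omega)
        (by omega) (G.adj_symm' h)
    · intro e; have := hnd.getElem_inj_iff.1 e; omega
    · intro e; have := hnd.getElem_inj_iff.1 e; omega

end Sec3
namespace MixedGraph

variable {V : Type*} {G D : MixedGraph V} {C : Set V} {i j : V}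

lemma isDAG.no_two_cycle (hD : D.isDAG) {a b : V} (h1 : D.arrow a b)
    (h2 : D.arrow b a) : False :=
  hD.2.2 a (Relation.TransGen.head h1 (Relation.TransGen.single h2))

section Erase

variable (p : List V) (t : ℕ)

lemma eraseIdx_len (h2 : t + 1 < p.length) :
    (p.eraseIdx t).length = p.length - 1 := by
  rw [List.length_eraseIdx]; simp only [if_pos (by omega : t < p.length)]

lemma eraseIdx_get_lt {s : ℕ} (hst : s < t) (h2 : t + 1 < p.length)
    (hq : s < (p.eraseIdx t).length) :
    (p.eraseIdx t)[s] = p[s]'(by rw [eraseIdx_len p t h2] at hq; omega) := by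
  rw [List.getElem_eraseIdx]; simp [hst]

lemma eraseIdx_get_ge {s : ℕ} (hst : t ≤ s)
    (hq : s < (p.eraseIdx t).length) (h2 : t + 1 < p.length) :
    (p.eraseIdx t)[s] = p[s+1]'(by rw [eraseIdx_len p t h2] at hq; omega) := by
  rw [List.getElem_eraseIdx]; simp [Nat.not_lt.2 hst]

end Erase

/-- Closure of `innerOK` under erasing an (inner) collider. -/
lemma innerOK_eraseIdx (hD : D.isDAG) (p : List V) (t : ℕ)
    (h1 : 1 ≤ t) (h2 : t + 1 < p.length)
    (hcol : D.collider (p[t-1]'(by omega)) (p[t]'(by omega)) (p[t+1]'(by omega)))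
    (hok : D.innerOK C p) : D.innerOK C (p.eraseIdx t) := by
  have hlen := eraseIdx_len p t h2
  have hok' := (innerOK_iff_get D C p).1 hok
  have harl : D.arrow (p[t-1]'(by omega)) (p[t]'(by omega)) := hD.headAt_arrow hcol.1
  have harr : D.arrow (p[t+1]'(by omega)) (p[t]'(by omega)) := hD.headAt_arrow hcol.2
  have hcent : (p[t]'(by omega)) ∈ C ∨ ∃ x ∈ C, D.anc (p[t]'(by omega)) x := by
    have g1 : p[(t-1)+1]'(by omega) = p[t]'(by omega) := gidx p (by omega)
    have g2 : p[(t-1)+2]'(by omega) = p[t+1]'(by omega) := gidx p (by omega)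
    have := (hok' (t-1) (by omega)).1
    rw [g1, g2] at this
    exact this hcol
  have hesc : ∀ {z : V}, D.arrow z (p[t]'(by omega)) →
      z ∈ C ∨ ∃ x ∈ C, D.anc z x := by
    intro z hz
    rcases hcent with hc | ⟨x, hx, hax⟩
    · exact Or.inr ⟨_, hc, Relation.ReflTransGen.single hz⟩
    · exact Or.inr ⟨x, hx, Relation.ReflTransGen.head hz hax⟩
  rw [innerOK_iff_get]
  intro s hs
  have hs' : s + 2 < p.length - 1 := by rwa [hlen] at hs
  rcases Nat.lt_or_ge (s+2) t with hst | hst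
  · -- wholly left of t
    rw [eraseIdx_get_lt p t (by omega) h2, eraseIdx_get_lt p t (by omega) h2,
      eraseIdx_get_lt p t (by omega) h2]
    exact hok' s (by omega)
  · rcases Nat.lt_or_ge s t with hst2 | hst2
    · rcases Nat.eq_or_lt_of_le hst with he | hlt
      · -- s + 2 = t : centre is p[t-1], right neighbour becomes p[t+1]
        rw [eraseIdx_get_lt p t (by omega) h2, eraseIdx_get_lt p t (by omega) h2,
          eraseIdx_get_ge p t (by omega) (by omega) h2]
        have gc : p[s+1]'(by omega) = p[t-1]'(by omega) := gidx p (by omega)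
        have gr : p[s+2+1]'(by omega) = p[t+1]'(by omega) := gidx p (by omega)
        rw [gc, gr]
        constructor
        · intro _; exact hesc harl
        · intro _ hmem
          have hold : ¬ D.collider (p[s]'(by omega)) (p[t-1]'(by omega))
              (p[t]'(by omega)) := by
            rintro ⟨-, hr⟩
            exact hD.no_two_cycle harl (hD.headAt_arrow hr)
          have gc2 : p[s+1]'(by omega) = p[t-1]'(by omega) := gidx p (by omega)
          have gr2 : p[s+2]'(by omega) = p[t]'(by omega) := gidx p (by omega)
          have hsok := (hok' s (by omega)).2
          rw [gc2, gr2] at hsok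
          exact hsok hold hmem
      · -- s + 1 = t : centre is p[t+1], left neighbour becomes p[t-1]
        have hseq : s + 1 = t := by omega
        rw [eraseIdx_get_lt p t (by omega) h2,
          eraseIdx_get_ge p t (by omega) (by omega) h2,
          eraseIdx_get_ge p t (by omega) (by omega) h2]
        have gl : p[s]'(by omega) = p[t-1]'(by omega) := gidx p (by omega)
        have gc : p[s+1+1]'(by omega) = p[t+1]'(by omega) := gidx p (by omega)
        have gr : p[s+2+1]'(by omega) = p[t+2]'(by omega) := gidx p (by omega)
        rw [gl, gc, gr]
        constructor
        · intro _; exact hesc harr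
        · intro _ hmem
          have hold : ¬ D.collider (p[t]'(by omega)) (p[t+1]'(by omega))
              (p[t+2]'(by omega)) := by
            rintro ⟨hl, -⟩
            exact hD.no_two_cycle (hD.headAt_arrow hl) harr
          have hsok := (hok' t (by omega)).2
          exact hsok hold hmem
    · -- wholly right of t
      rw [eraseIdx_get_ge p t (by omega) (by omega) h2,
        eraseIdx_get_ge p t (by omega) (by omega) h2,
        eraseIdx_get_ge p t (by omega) (by omega) h2]
      exact hok' (s+1) (by omega)

end MixedGraph
namespace MixedGraph

variable {V : Type*} {G D : MixedGraph V} {C : Set V} {i j : V}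

/-- Eliminate all inner colliders from a path, preserving a predicate `P`. -/
lemma elim_colliders (hD : D.isDAG)
    (hshield : ∀ a b c : V, D.collider a b c → a ≠ c → D.adj a c)
    (P : List V → Prop)
    (hP : ∀ (p : List V) (t : ℕ) (ht1 : 1 ≤ t) (ht2 : t + 1 < p.length),
      p.Nodup → List.Chain' D.adj p →
      D.collider (p[t-1]'(by omega)) (p[t]'(by omega)) (p[t+1]'(by omega)) →
      P p → P (p.eraseIdx t)) :
    ∀ (n : ℕ) (p : List V), p.length ≤ n → p.Nodup → List.Chain' D.adj p →
      2 ≤ p.length → p.head? = some i → p.getLast? = some j → P p →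
      ∃ q : List V, q.Nodup ∧ List.Chain' D.adj q ∧ 2 ≤ q.length ∧
        q.head? = some i ∧ q.getLast? = some j ∧ P q ∧
        ∀ t (ht1 : 1 ≤ t) (ht2 : t + 1 < q.length),
          ¬ D.collider (q[t-1]'(by omega)) (q[t]'(by omega)) (q[t+1]'(by omega)) := by
  intro n
  induction n with
  | zero => intro p hn _ _ h2 _ _ _; omega
  | succ n IH =>
    intro p hn hnd hch h2 hh hl hPp
    by_cases hcol : ∃ t, ∃ (ht1 : 1 ≤ t) (ht2 : t + 1 < p.length),
        D.collider (p[t-1]'(by omega)) (p[t]'(by omega)) (p[t+1]'(by omega))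
    · obtain ⟨t, ht1, ht2, hc⟩ := hcol
      set q := p.eraseIdx t with hq
      have hlen : q.length = p.length - 1 := eraseIdx_len p t ht2
      have hlen2 : (p.eraseIdx t).length = p.length - 1 := eraseIdx_len p t ht2
      have hndq : q.Nodup := (List.eraseIdx_sublist p t).nodup hnd
      have hne : (p[t-1]'(by omega)) ≠ (p[t+1]'(by omega)) := by
        intro e; have := hnd.getElem_inj_iff.1 e; omega
      have hshld : D.adj (p[t-1]'(by omega)) (p[t+1]'(by omega)) :=
        hshield _ _ _ hc hne
      have hchq : List.Chain' D.adj q := by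
        show List.IsChain _ _
        rw [List.isChain_iff_getElem]
        intro s hsq
        have hsq' : s + 1 < q.length := by omega
        have hsp : s + 2 < p.length := by omega
        rcases Nat.lt_or_ge (s+1) t with hst | hst
        · rw [eraseIdx_get_lt p t (by omega) ht2, eraseIdx_get_lt p t (by omega) ht2]
          exact chain'_getElem hch (by omega)
        · rcases Nat.eq_or_lt_of_le hst with he | hlt
          · -- s+1 = t
            rw [eraseIdx_get_lt p t (by omega) ht2,
              eraseIdx_get_ge p t (by omega) (by omega) ht2]
            have gl : p[s]'(by omega) = p[t-1]'(by omega) := gidx p (by omega)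
            have gr : p[s+1+1]'(by omega) = p[t+1]'(by omega) := gidx p (by omega)
            rw [gl, gr]; exact hshld
          · rw [eraseIdx_get_ge p t (by omega) (by omega) ht2,
              eraseIdx_get_ge p t (by omega) (by omega) ht2]
            exact chain'_getElem hch (by omega)
      have h2q : 2 ≤ q.length := by omega
      have hhq : q.head? = some i := by
        rw [List.head?_eq_getElem?]
        obtain ⟨_, h0⟩ := head_getElem hh
        rw [List.getElem?_eq_getElem (by omega : 0 < q.length),
          eraseIdx_get_lt p t (by omega) ht2]
        exact congrArg some h0
      have hlq : q.getLast? = some j := by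
        rw [List.getLast?_eq_getElem?]
        obtain ⟨_, hl0⟩ := getLast_getElem hl
        rw [List.getElem?_eq_getElem (by omega : q.length - 1 < q.length),
          eraseIdx_get_ge p t (by omega) (by omega) ht2]
        have g : p[(q.length-1)+1]'(by omega) = p[p.length-1]'(by omega) :=
          gidx p (by omega)
        rw [g]
        exact congrArg some hl0
      have hPq : P q := hP p t ht1 ht2 hnd hch hc hPp
      exact IH q (by omega) hndq hchq h2q hhq hlq hPq
    · push_neg at hcol
      exact ⟨p, hnd, hch, h2, hh, hl, hPp, fun t ht1 ht2 => hcol t ht1 ht2⟩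

variable (hD : D.isDAG) (hG : G.isUG)
  (hskel : ∀ i j, G.adj i j ↔ D.adj i j)
  (hshield : ∀ a b c : V, D.collider a b c → a ≠ c → D.adj a c)

/-- In an undirected graph all inner nodes of a connecting path avoid `C`. -/
lemma ug_inner_avoid (hG : G.isUG) {p : List V} (hok : G.innerOK C p) :
    ∀ t (h1 : 1 ≤ t) (h2 : t + 1 < p.length), (p[t]'(by omega)) ∉ C := by
  intro t h1 h2
  have := ((innerOK_iff_get G C p).1 hok) (t-1) (by omega)
  have gc : p[(t-1)+1]'(by omega) = p[t]'(by omega) := gidx p (by omega)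
  have hnc : ¬ G.collider (p[t-1]'(by omega)) (p[(t-1)+1]'(by omega))
      (p[(t-1)+2]'(by omega)) := fun hc => hG.not_headAt _ _ hc.1
  have h := this.2 hnc
  rwa [gc] at h

include hD hG hskel hshield in
lemma conn_transfer :
    (∃ p, G.mConnecting C i j p) ↔ (∃ p, D.mConnecting C i j p) := by
  constructor
  · rintro ⟨p, ⟨hnd, hch⟩, h2, hh, hl, hok⟩
    have hchD : List.Chain' D.adj p := hch.imp (fun a b h => (hskel a b).1 h)
    have hPp : ∀ x ∈ p, x ∉ C ∨ x = i ∨ x = j := by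
      intro x hx
      obtain ⟨t, ht, rfl⟩ := List.mem_iff_getElem.1 hx
      rcases Nat.eq_zero_or_pos t with rfl | h1
      · obtain ⟨_, h0⟩ := head_getElem hh
        exact Or.inr (Or.inl h0)
      rcases Nat.lt_or_ge (t+1) p.length with h2' | h2'
      · exact Or.inl (ug_inner_avoid hG hok t h1 h2')
      · obtain ⟨_, hl0⟩ := getLast_getElem hl
        have g : p[t] = p[p.length - 1] := gidx p (by omega)
        exact Or.inr (Or.inr (g ▸ hl0))
    obtain ⟨q, hndq, hchq, h2q, hhq, hlq, hPq, hnocol⟩ :=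
      elim_colliders hD hshield (fun l => ∀ x ∈ l, x ∉ C ∨ x = i ∨ x = j)
        (fun l t _ _ _ _ _ hPl x hx =>
          hPl x (List.mem_of_mem_eraseIdx hx))
        p.length p le_rfl hnd hchD h2 hh hl hPp
    refine ⟨q, ⟨hndq, hchq⟩, h2q, hhq, hlq, ?_⟩
    rw [innerOK_iff_get]
    intro s hs
    constructor
    · intro hc
      exact absurd hc (by
        have := hnocol (s+1) (by omega) (by omega)
        have g1 : q[(s+1)-1]'(by omega) = q[s]'(by omega) := gidx q (by omega)
        have g2 : q[(s+1)+1]'(by omega) = q[s+2]'(by omega) := gidx q (by omega)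
        rwa [g1, g2] at this)
    · intro _ hmem
      rcases hPq (q[s+1]'(by omega)) (List.getElem_mem _) with h | h | h
      · exact h hmem
      · obtain ⟨_, h0⟩ := head_getElem hhq
        rw [← h0] at h
        have := hndq.getElem_inj_iff.1 h; omega
      · obtain ⟨_, hl0⟩ := getLast_getElem hlq
        rw [← hl0] at h
        have := hndq.getElem_inj_iff.1 h; omega
  · rintro ⟨p, ⟨hnd, hch⟩, h2, hh, hl, hok⟩
    obtain ⟨q, hndq, hchq, h2q, hhq, hlq, hPq, hnocol⟩ :=
      elim_colliders hD hshield (fun l => D.innerOK C l)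
        (fun l t ht1 ht2 _ _ hc hPl => innerOK_eraseIdx hD l t ht1 ht2 hc hPl)
        p.length p le_rfl hnd hch h2 hh hl hok
    refine ⟨q, ⟨hndq, hchq.imp (fun a b h => (hskel a b).2 h)⟩, h2q, hhq, hlq, ?_⟩
    rw [innerOK_iff_get]
    intro s hs
    have hnc : ¬ D.collider (q[s]'(by omega)) (q[s+1]'(by omega))
        (q[s+2]'(by omega)) := by
      have := hnocol (s+1) (by omega) (by omega)
      have g1 : q[(s+1)-1]'(by omega) = q[s]'(by omega) := gidx q (by omega)
      have g2 : q[(s+1)+1]'(by omega) = q[s+2]'(by omega) := gidx q (by omega)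
      rwa [g1, g2] at this
    constructor
    · intro hc; exact absurd hc.1 (hG.not_headAt _ _)
    · intro _
      exact (((innerOK_iff_get D C q).1 hPq) s hs).2 hnc

end MixedGraph
namespace MixedGraph

variable {V : Type*} {G D : MixedGraph V}

lemma markovEquiv_of (hD : D.isDAG) (hG : G.isUG)
    (hskel : ∀ i j, G.adj i j ↔ D.adj i j)
    (hshield : ∀ a b c : V, D.collider a b c → a ≠ c → D.adj a c) :
    G.markovEquiv D := by
  intro A B C _ _ _
  unfold mSep
  apply not_congr
  constructor
  · rintro ⟨i, j, p, hi, hj, hc⟩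
    obtain ⟨q, hq⟩ := (conn_transfer hD hG hskel hshield).1 ⟨p, hc⟩
    exact ⟨i, j, q, hi, hj, hq⟩
  · rintro ⟨i, j, p, hi, hj, hc⟩
    obtain ⟨q, hq⟩ := (conn_transfer hD hG hskel hshield).2 ⟨p, hc⟩
    exact ⟨i, j, q, hi, hj, hq⟩

/-- From a perfect elimination ordering, build a Markov equivalent DAG. -/
lemma equiv_dag_of_peo (hG : G.isUG) (f : V → ℕ) (hinj : Function.Injective f)
    (hpeo : ∀ x y z, G.adj x z → G.adj y z → f x < f z → f y < f z → x ≠ y →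
      G.adj x y) :
    ∃ D : MixedGraph V, D.isDAG ∧ G.markovEquiv D := by
  let D : MixedGraph V :=
    { line := fun _ _ => False
      arrow := fun a b => G.adj a b ∧ f a < f b
      arc := fun _ _ => False
      line_symm := fun _ _ h => h.elim
      arc_symm := fun _ _ h => h.elim
      line_irrefl := fun _ h => h
      arrow_irrefl := fun i h => lt_irrefl _ h.2
      arc_irrefl := fun _ h => h }
  have hD : D.isDAG := by
    refine ⟨fun _ _ h => h, fun _ _ h => h, ?_⟩
    have mono : ∀ a b, Relation.TransGen D.arrow a b → f a < f b := by
      intro a b h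
      induction h with
      | single h => exact h.2
      | tail _ h2 ih => exact lt_trans ih h2.2
    exact fun i h => lt_irrefl _ (mono i i h)
  have hskel : ∀ i j, G.adj i j ↔ D.adj i j := by
    intro i j
    constructor
    · intro h
      rcases lt_trichotomy (f i) (f j) with hlt | heq | hgt
      · exact Or.inr (Or.inl ⟨h, hlt⟩)
      · exact absurd (hinj heq) (ne_of_adj h)
      · exact Or.inr (Or.inr (Or.inl ⟨G.adj_symm' h, hgt⟩))
    · rintro (h | h | h | h)
      · exact h.elim
      · exact h.1
      · exact G.adj_symm' h.1
      · exact h.elim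
  have hshield : ∀ a b c : V, D.collider a b c → a ≠ c → D.adj a c := by
    rintro a b c ⟨ha, hc⟩ hne
    have ha' : G.adj a b ∧ f a < f b := by
      rcases ha with h | h
      · exact h
      · exact h.elim
    have hc' : G.adj c b ∧ f c < f b := by
      rcases hc with h | h
      · exact h
      · exact h.elim
    exact (hskel a c).1 (hpeo a c b ha'.1 hc'.1 ha'.2 hc'.2 hne)
  exact ⟨D, hD, markovEquiv_of hD hG hskel hshield⟩

end MixedGraph
section Chordal

variable {V : Type*} {adj : V → V → Prop}

/-- One adjacency step inside a vertex set `T`. -/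
def stepIn (adj : V → V → Prop) (T : Set V) (x y : V) : Prop :=
  x ∈ T ∧ y ∈ T ∧ adj x y

/-- Reachability inside a vertex set `T`. -/
def reachIn (adj : V → V → Prop) (T : Set V) (x y : V) : Prop :=
  Relation.ReflTransGen (stepIn adj T) x y

/-- Connected component of `a` inside `T`. -/
def compo (adj : V → V → Prop) (T : Set V) (a : V) : Set V :=
  {x | x ∈ T ∧ reachIn adj T a x}

variable (hsym : ∀ i j, adj i j → adj j i)

section
include hsym

lemma reachIn_symm {T : Set V} {x y : V} (h : reachIn adj T x y) :
    reachIn adj T y x := by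
  induction h with
  | refl => exact .refl
  | tail _ step ih =>
    exact Relation.ReflTransGen.head ⟨step.2.1, step.1, hsym _ _ step.2.2⟩ ih

end

lemma mem_compo_self {T : Set V} {a : V} (ha : a ∈ T) : a ∈ compo adj T a :=
  ⟨ha, .refl⟩

lemma compo_subset {T : Set V} {a x : V} (hx : x ∈ compo adj T a) : x ∈ T := hx.1

lemma compo_closed {T : Set V} {a x y : V} (hx : x ∈ compo adj T a)
    (hy : y ∈ T) (hadj : adj x y) : y ∈ compo adj T a :=
  ⟨hy, hx.2.tail ⟨hx.1, hy, hadj⟩⟩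

include hsym in
lemma compo_disjoint {T : Set V} {a b x : V} (hab : ¬ reachIn adj T a b)
    (hxa : x ∈ compo adj T a) (hxb : x ∈ compo adj T b) : False :=
  hab (hxa.2.trans (reachIn_symm hsym hxb.2))

include hsym in
lemma compo_no_cross {T : Set V} {a b x y : V} (hab : ¬ reachIn adj T a b)
    (hxa : x ∈ compo adj T a) (hyb : y ∈ compo adj T b) (hadj : adj x y) :
    False :=
  compo_disjoint hsym hab (compo_closed hxa hyb.1 hadj) hyb

lemma reach_restrict {T : Set V} {a x : V} (h : reachIn adj T a x) :
    reachIn adj (compo adj T a) a x := by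
  induction h with
  | refl => exact .refl
  | tail h1 step ih =>
    exact ih.tail ⟨⟨step.1, h1⟩, ⟨step.2.1, h1.tail step⟩, step.2.2⟩

include hsym in
lemma reach_in_compo {T : Set V} {a x y : V}
    (hx : x ∈ compo adj T a) (hy : y ∈ compo adj T a) :
    reachIn adj (compo adj T a) x y := by
  have h1 := reach_restrict (adj := adj) hx.2
  have h2 := reach_restrict (adj := adj) hy.2
  exact (reachIn_symm hsym h1).trans h2

lemma reachIn_to_list {T : Set V} {x y : V} (h : reachIn adj T x y) (hx : x ∈ T) :
    ∃ l : List V, List.Chain' adj l ∧ l.head? = some x ∧ l.getLast? = some y ∧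
      ∀ z ∈ l, z ∈ T := by
  induction h with
  | refl => exact ⟨[x], by simp [List.Chain'], rfl, rfl, by simpa⟩
  | @tail b c h1 step ih =>
    obtain ⟨l, hch, hh, hl, hmem⟩ := ih
    have hlne : l ≠ [] := by rintro rfl; simp at hh
    refine ⟨l ++ [c], ?_, ?_, ?_, ?_⟩
    · refine List.isChain_append.2 ⟨hch, by simp, ?_⟩
      intro u hu v hv
      simp only [List.head?_cons, Option.mem_def, Option.some.injEq] at hv
      rw [hl] at hu
      simp only [Option.mem_def, Option.some.injEq] at hu
      subst hu; subst hv
      exact step.2.2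
    · rw [List.head?_append, hh]; rfl
    · rw [List.getLast?_append]; rfl
    · intro z hz
      rcases List.mem_append.1 hz with hz | hz
      · exact hmem z hz
      · simp only [List.mem_singleton] at hz
        subst hz; exact step.2.1

lemma list_to_reach {T : Set V} :
    ∀ (l : List V), List.Chain' adj l → (∀ z ∈ l, z ∈ T) →
      ∀ {x y : V}, l.head? = some x → l.getLast? = some y → reachIn adj T x y := by
  intro l
  induction l with
  | nil => intro _ _ x y h; simp at h
  | cons a rest ih =>
    intro hch hmem x y hh hl
    have hax : a = x := by simpa using hh
    subst hax
    cases rest with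
    | nil =>
      have : a = y := by simpa using hl
      subst this; exact .refl
    | cons b rest' =>
      have hch' := List.isChain_cons_cons.1 hch
      have hr : reachIn adj T b y := ih hch'.2 (fun z hz => hmem z (by simp [hz]))
        rfl (by rw [← hl, List.getLast?_cons_cons])
      exact Relation.ReflTransGen.head
        ⟨hmem a (by simp), hmem b (by simp), hch'.1⟩ hr

end Chordal
section Chordal2

open MixedGraph

variable {V : Type*} {adj : V → V → Prop}

lemma glue_facts (q : List V) (m n : ℕ) (hmn : m < n) (hn : n < q.length)
    (hch : List.Chain' adj q) (hlink : adj (q[m]'(by omega)) (q[n])) :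
    (q.take (m+1) ++ q.drop n).length = m + 1 + (q.length - n) ∧
    List.Chain' adj (q.take (m+1) ++ q.drop n) ∧
    (q.take (m+1) ++ q.drop n).head? = q.head? ∧
    (q.take (m+1) ++ q.drop n).getLast? = q.getLast? ∧
    (∀ s (hs : s ≤ m),
      (q.take (m+1) ++ q.drop n)[s]'(by
        simp only [List.length_append, List.length_take, List.length_drop]; omega) =
      q[s]'(by omega)) ∧
    (∀ s (hs1 : m < s) (hs2 : s < m + 1 + (q.length - n)),
      (q.take (m+1) ++ q.drop n)[s]'(by
        simp only [List.length_append, List.length_take, List.length_drop]; omega) =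
      q[s + (n - m - 1)]'(by omega)) := by
  have htl : (q.take (m+1)).length = m + 1 := by
    rw [List.length_take]; omega
  have hdl : (q.drop n).length = q.length - n := List.length_drop
  have hlen : (q.take (m+1) ++ q.drop n).length = m + 1 + (q.length - n) := by
    rw [List.length_append, htl, hdl]
  have hget1 : ∀ s (hs : s ≤ m),
      (q.take (m+1) ++ q.drop n)[s]'(by rw [hlen]; omega) = q[s]'(by omega) := by
    intro s hs
    rw [List.getElem_append]
    simp only [htl, dif_pos (by omega : s < m + 1)]
    exact List.getElem_take
  have hget2 : ∀ s (hs1 : m < s) (hs2 : s < m + 1 + (q.length - n)),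
      (q.take (m+1) ++ q.drop n)[s]'(by rw [hlen]; omega) =
        q[s + (n - m - 1)]'(by omega) := by
    intro s hs1 hs2
    rw [List.getElem_append]
    simp only [htl, dif_neg (by omega : ¬ s < m + 1)]
    exact (List.getElem_drop).trans (gidx q (by omega))
  refine ⟨hlen, ?_, ?_, ?_, hget1, hget2⟩
  · refine List.isChain_append.2 ⟨List.IsChain.take hch _, List.IsChain.drop hch _, ?_⟩
    intro u hu v hv
    have hu' : (q.take (m+1)).getLast? = some (q[m]'(by omega)) := by
      rw [List.getLast?_eq_getElem?]
      refine List.getElem?_eq_some_iff.2 ⟨by rw [htl]; omega, ?_⟩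
      rw [gidx (q.take (m+1)) (by rw [htl]; omega : (q.take (m+1)).length - 1 = m)]
      exact List.getElem_take
    have hv' : (q.drop n).head? = some (q[n]) := by
      rw [List.head?_eq_getElem?,
        List.getElem?_eq_getElem (by rw [hdl]; omega : 0 < (q.drop n).length)]
      exact congrArg some ((List.getElem_drop).trans (gidx q (by omega)))
    rw [hu'] at hu; rw [hv'] at hv
    simp only [Option.mem_def, Option.some.injEq] at hu hv
    subst hu; subst hv
    exact hlink
  · rw [List.head?_append]
    have : (q.take (m+1)).head? = q.head? := by
      rw [List.head?_eq_getElem?, List.head?_eq_getElem?,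
        List.getElem?_eq_getElem (by rw [htl]; omega : 0 < (q.take (m+1)).length),
        List.getElem?_eq_getElem (by omega : 0 < q.length)]
      exact congrArg some (List.getElem_take)
    rw [this]
    cases h : q.head? with
    | none => rw [List.head?_eq_none_iff] at h; subst h; simp at hn
    | some a => rfl
  · rw [List.getLast?_append]
    have : (q.drop n).getLast? = q.getLast? := by
      rw [List.getLast?_eq_getElem? (l := q.drop n), List.getLast?_eq_getElem? (l := q),
        List.getElem?_eq_getElem (by omega : q.length - 1 < q.length)]
      refine List.getElem?_eq_some_iff.2 ⟨by rw [hdl]; omega, ?_⟩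
      rw [gidx (q.drop n) (by rw [hdl] :
        (q.drop n).length - 1 = q.length - n - 1)]
      exact (List.getElem_drop).trans (gidx q (by omega))
    rw [this]
    cases h : q.getLast? with
    | none => rw [List.getLast?_eq_none_iff] at h; subst h; simp at hn
    | some a => rfl

/-- Existence of a minimal (hence induced, chord-free) connecting list through
a connected set `K` between two outside vertices `x, y`. -/
lemma exists_min_list (K : Set V) (x y : V) (hxy : x ≠ y) (hnadj : ¬ adj x y)
    (hxK : x ∉ K) (hyK : y ∉ K)
    (hconn : ∀ u v, u ∈ K → v ∈ K → reachIn adj K u v)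
    (hux : ∃ u ∈ K, adj x u) (hvy : ∃ v ∈ K, adj v y) :
    ∃ q : List V, 3 ≤ q.length ∧ List.Chain' adj q ∧ q.head? = some x ∧
      q.getLast? = some y ∧
      (∀ t (h1 : 1 ≤ t) (h2 : t + 1 < q.length), q[t]'(by omega) ∈ K) ∧
      q.Nodup ∧
      (∀ a b (ha : a < q.length) (hb : b < q.length), a + 2 ≤ b →
        ¬(a = 0 ∧ b = q.length - 1) → ¬ adj (q[a]) (q[b])) := by
  classical
  set Cand : List V → Prop := fun q =>
    List.Chain' adj q ∧ q.head? = some x ∧ q.getLast? = some y ∧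
      ∀ t (h1 : 1 ≤ t) (h2 : t + 1 < q.length), q[t]'(by omega) ∈ K with hCand
  obtain ⟨u, huK, hxu⟩ := hux
  obtain ⟨v, hvK, hvy'⟩ := hvy
  have hne : ∃ q, Cand q := by
    obtain ⟨l, hchl, hh, hl, hmem⟩ := reachIn_to_list (hconn u v huK hvK) huK
    obtain ⟨a0, l', rfl⟩ : ∃ a0 l', l = a0 :: l' := by
      cases l with
      | nil => simp at hh
      | cons a0 l' => exact ⟨a0, l', rfl⟩
    have ha0 : a0 = u := by simpa using hh
    refine ⟨x :: ((a0 :: l') ++ [y]), ?_, rfl, ?_, ?_⟩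
    · refine List.isChain_cons.2 ⟨?_, List.isChain_append.2 ⟨hchl, by simp, ?_⟩⟩
      · intro z hz
        simp only [List.cons_append, List.head?_cons, Option.mem_def,
          Option.some.injEq] at hz
        subst hz; rw [ha0]; exact hxu
      · intro c hc d hd
        rw [hl] at hc
        simp only [Option.mem_def, Option.some.injEq, List.head?_cons] at hc hd
        subst hc; subst hd; exact hvy'
    · rw [← List.cons_append, List.getLast?_concat]
    · intro t h1 h2
      have h2' : t + 1 < l'.length + 3 := by simp at h2; omega
      have ht' : t - 1 < (a0 :: l').length := by simp; omega
      have e1 : (x :: ((a0 :: l') ++ [y]))[t]'(by omega) =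
          ((a0 :: l') ++ [y])[t-1]'(by simp; omega) := by
        rw [gidx _ (by omega : t = (t-1)+1)]
        exact List.getElem_cons_succ ..
      rw [e1, List.getElem_append]
      simp only [dif_pos ht']
      exact hmem _ (List.getElem_mem _)
  -- choose a candidate of minimal length
  have hex : ∃ nn, ∃ q, Cand q ∧ q.length = nn := by
    obtain ⟨q, hq⟩ := hne; exact ⟨q.length, q, hq, rfl⟩
  obtain ⟨q, hq, hqlen⟩ := Nat.find_spec hex
  have hmin : ∀ q', Cand q' → Nat.find hex ≤ q'.length := by
    intro q' hq'
    exact Nat.find_min' hex ⟨q', hq', rfl⟩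
  obtain ⟨hch, hh, hl, hK⟩ := hq
  have h0l : 0 < q.length := by
    rcases q with _ | _
    · simp at hh
    · simp
  obtain ⟨_, h0⟩ := head_getElem hh
  obtain ⟨_, hlast⟩ := getLast_getElem hl
  have h3 : 3 ≤ q.length := by
    rcases Nat.lt_or_ge q.length 3 with h | h
    · exfalso
      have h2 : q.length = 1 ∨ q.length = 2 := by omega
      rcases h2 with h2 | h2
      · apply hxy
        rw [← h0, ← hlast]
        exact gidx q (by omega)
      · apply hnadj
        have := chain'_getElem hch (t := 0) (by omega)
        rw [h0] at this
        have e : 0 + 1 = q.length - 1 := by omega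
        rw [gidx q e, hlast] at this
        exact this
    · exact h
  -- a general shortcut refutation
  have hshort : ∀ (a b : ℕ) (ha : a < q.length) (hb : b < q.length), a < b →
      adj (q[a]) (q[b]) → a + 1 + (q.length - b) < q.length → False := by
    intro a b ha hb hab hadj hshorter
    obtain ⟨hlen', hch', hh', hl', hget1, hget2⟩ :=
      glue_facts q a b hab hb hch hadj
    have hcand : Cand (q.take (a+1) ++ q.drop b) := by
      refine ⟨hch', by rw [hh']; exact hh, by rw [hl']; exact hl, ?_⟩
      intro t h1 h2
      rw [hlen'] at h2
      rcases le_or_gt t a with hta | hta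
      · rw [hget1 t hta]
        exact hK t h1 (by omega)
      · rw [hget2 t hta (by omega)]
        exact hK (t + (b - a - 1)) (by omega) (by omega)
    have := hmin _ hcand
    rw [hlen'] at this
    omega
  -- nodup
  have hinj : ∀ (a b : ℕ) (ha : a < q.length) (hb : b < q.length), a < b →
      q[a] = q[b] → False := by
    intro a b ha hb hab he
    have hbne : b ≠ q.length - 1 := by
      intro e
      subst e
      have hyq : q[a] = y := by rw [he, hlast]
      rcases Nat.eq_zero_or_pos a with rfl | h1
      · exact hxy (by rw [← h0, hyq])
      · exact hyK (hyq ▸ hK a h1 (by omega))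
    have hane : a ≠ 0 := by
      intro e
      subst e
      have hxq : q[b] = x := by rw [← he, h0]
      exact hxK (hxq ▸ hK b (by omega) (by omega))
    -- glue from a to b+1
    have hb1 : b + 1 < q.length := by omega
    have hadj' : adj (q[a]) (q[b+1]) := by
      rw [he]; exact chain'_getElem hch hb1
    exact hshort a (b+1) ha hb1 (by omega) hadj' (by omega)
  have hnd : q.Nodup := by
    rw [List.nodup_iff_injective_get]
    intro ⟨a, ha⟩ ⟨b, hb⟩ he
    simp only [List.get_eq_getElem] at he
    rcases lt_trichotomy a b with h | h | h
    · exact absurd he (fun he => hinj a b ha hb h he)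
    · simp [h]
    · exact absurd he.symm (fun he => hinj b a hb ha h he)
  refine ⟨q, h3, hch, hh, hl, hK, hnd, ?_⟩
  intro a b ha hb hab hne2 hadj
  exact hshort a b ha hb (by omega) hadj (by omega)

end Chordal2
section Chordal3

open MixedGraph

variable {V : Type*} {adj : V → V → Prop}

lemma sep_clique (hsym : ∀ i j, adj i j → adj j i)
    (hchord : chordalRel adj)
    {S : Finset V} {a b : V} {T : Set V}
    (hnreach : ¬ reachIn adj T a b)
    (hnbr : ∀ c ∈ S, (∃ u ∈ compo adj T a, adj u c) ∧
      (∃ w ∈ compo adj T b, adj c w))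
    (hSnotT : ∀ c ∈ S, c ∉ T) :
    ∀ c ∈ S, ∀ d ∈ S, c ≠ d → adj c d := by
  intro c hc d hd hcd
  by_contra hna
  obtain ⟨⟨uc, hucA, hadjuc⟩, ⟨wc, hwcB, hadjwc⟩⟩ := hnbr c hc
  obtain ⟨⟨ud, hudA, hadjud⟩, ⟨wd, hwdB, hadjwd⟩⟩ := hnbr d hd
  have hcT : c ∉ T := hSnotT c hc
  have hdT : d ∉ T := hSnotT d hd
  -- minimal connecting list through component of a
  obtain ⟨qA, h3A, hchA, hhA, hlA, hKA, hndA, hcdA⟩ :=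
    exists_min_list (adj := adj) (compo adj T a) c d hcd hna
      (fun h => hcT (compo_subset h)) (fun h => hdT (compo_subset h))
      (fun u v hu hv => reach_in_compo hsym hu hv)
      ⟨uc, hucA, hsym _ _ hadjuc⟩ ⟨ud, hudA, hadjud⟩
  -- minimal connecting list through component of b
  obtain ⟨qB, h3B, hchB, hhB, hlB, hKB, hndB, hcdB⟩ :=
    exists_min_list (adj := adj) (compo adj T b) d c (Ne.symm hcd)
      (fun h => hna (hsym _ _ h))
      (fun h => hdT (compo_subset h)) (fun h => hcT (compo_subset h))
      (fun u v hu hv => reach_in_compo hsym hu hv)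
      ⟨wd, hwdB, hadjwd⟩ ⟨wc, hwcB, hsym _ _ hadjwc⟩
  set nA := qA.length with hnA
  set nB := qB.length with hnB
  obtain ⟨_, hqA0⟩ := head_getElem hhA
  obtain ⟨_, hqAl⟩ := getLast_getElem hlA
  obtain ⟨_, hqB0⟩ := head_getElem hhB
  obtain ⟨_, hqBl⟩ := getLast_getElem hlB
  set mid := (qB.drop 1).dropLast with hmid
  have hmlen : mid.length = nB - 2 := by
    simp only [hmid, List.length_dropLast, List.length_drop]
    omega
  have hmget : ∀ s (hs : s < nB - 2), mid[s]'(by omega) = qB[s+1]'(by omega) := by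
    intro s hs
    exact (List.getElem_dropLast (xs := qB.drop 1) (i := s) (by
        rw [List.length_dropLast, List.length_drop]; omega)).trans
      (List.getElem_drop.trans (gidx qB (by omega)))
  set p := qA ++ mid with hp
  have hplen : p.length = nA + (nB - 2) := by
    rw [hp, List.length_append, hmlen]
  have hpgetA : ∀ t (ht : t < nA), p[t]'(by rw [hplen]; omega) = qA[t]'(by omega) := by
    intro t ht
    have h1 : t < (qA ++ mid).length := by
      rw [List.length_append, hmlen]; omega
    have e := List.getElem_append (l₁ := qA) (l₂ := mid) h1
    simp only [dif_pos (by omega : t < qA.length)] at e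
    exact e
  have hpgetB : ∀ t (ht1 : nA ≤ t) (ht2 : t < nA + (nB - 2)),
      p[t]'(by rw [hplen]; omega) = qB[t - nA + 1]'(by omega) := by
    intro t ht1 ht2
    have h1 : t < (qA ++ mid).length := by
      rw [List.length_append, hmlen]; omega
    have e := List.getElem_append (l₁ := qA) (l₂ := mid) h1
    simp only [dif_neg (by omega : ¬ t < qA.length)] at e
    rw [hmget (t - qA.length) (by omega)] at e
    exact e.trans (gidx qB (by omega))
  -- inner membership facts
  have hmemA : ∀ t (h1 : 1 ≤ t) (h2 : t + 1 < nA), qA[t]'(by omega) ∈ compo adj T a :=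
    hKA
  have hmemB : ∀ t (h1 : 1 ≤ t) (h2 : t + 1 < nB), qB[t]'(by omega) ∈ compo adj T b :=
    hKB
  refine hchord ⟨p, ?_, ?_, ?_, ?_, ?_⟩
  · rw [hplen]; omega
  · -- Nodup
    rw [List.nodup_iff_injective_get]
    intro ⟨x1, hx1⟩ ⟨x2, hx2⟩ he
    simp only [List.get_eq_getElem] at he
    rw [hplen] at hx1 hx2
    by_contra hne
    simp only [Fin.mk.injEq] at hne
    -- wlog x1 < x2
    have key : ∀ (y1 y2 : ℕ) (h1 : y1 < nA + (nB - 2)) (h2 : y2 < nA + (nB - 2)),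
        y1 < y2 → (p[y1]'(by rw [hplen]; omega)) = (p[y2]'(by rw [hplen]; omega)) →
        False := by
      intro y1 y2 h1 h2 hlt heq
      rcases Nat.lt_or_ge y2 nA with hy2 | hy2
      · rw [hpgetA y1 (by omega), hpgetA y2 (by omega)] at heq
        have := hndA.getElem_inj_iff.1 heq; omega
      · rcases Nat.lt_or_ge y1 nA with hy1 | hy1
        · -- cross case
          rw [hpgetA y1 (by omega), hpgetB y2 hy2 h2] at heq
          have hyB : qB[y2 - nA + 1]'(by omega) ∈ compo adj T b :=
            hmemB _ (by omega) (by omega)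
          rcases Nat.eq_zero_or_pos y1 with rfl | hy1p
          · rw [hqA0] at heq
            exact hcT (compo_subset (heq ▸ hyB))
          rcases Nat.lt_or_ge y1 (nA - 1) with hy1l | hy1l
          · have hyA : qA[y1]'(by omega) ∈ compo adj T a := hmemA _ hy1p (by omega)
            exact compo_disjoint hsym hnreach (heq ▸ hyA) hyB
          · have : y1 = nA - 1 := by omega
            subst this
            rw [gidx qA (rfl : nA - 1 = nA - 1), hqAl] at heq
            exact hdT (compo_subset (heq ▸ hyB))
        · rw [hpgetB y1 hy1 h1, hpgetB y2 hy2 h2] at heq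
          have := hndB.getElem_inj_iff.1 heq; omega
    rcases lt_trichotomy x1 x2 with h | h | h
    · exact key x1 x2 hx1 hx2 h he
    · exact hne h
    · exact key x2 x1 hx2 hx1 h he.symm
  · -- Chain'
    refine List.isChain_append.2 ⟨hchA, ?_, ?_⟩
    · rw [hmid, List.dropLast_eq_take]
      exact List.IsChain.take (List.IsChain.drop hchB 1) _
    · intro u hu v hv
      rw [hlA] at hu
      have hv' : mid.head? = some (qB[1]'(by omega)) := by
        rw [List.head?_eq_getElem?,
          List.getElem?_eq_getElem (by rw [hmlen]; omega : 0 < mid.length)]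
        exact congrArg some (hmget 0 (by omega))
      rw [hv'] at hv
      simp only [Option.mem_def, Option.some.injEq] at hu hv
      subst hu; subst hv
      have := chain'_getElem hchB (t := 0) (by omega)
      rwa [hqB0] at this
  · -- wrap adjacency
    intro a' b' hh' hl'
    have hph : p.head? = some c := by
      rw [List.head?_eq_getElem?,
        List.getElem?_eq_getElem (by rw [hplen]; omega : 0 < p.length)]
      exact congrArg some (by rw [hpgetA 0 (by omega)]; exact hqA0)
    have hpl : p.getLast? = some (qB[nB-2]'(by omega)) := by
      rw [List.getLast?_eq_getElem?,
        List.getElem?_eq_getElem (by omega : p.length - 1 < p.length)]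
      refine congrArg some ?_
      have e : p.length - 1 = nA + (nB - 2) - 1 := by rw [hplen]
      rw [gidx p e, hpgetB (nA + (nB - 2) - 1) (by omega) (by omega)]
      exact gidx qB (by omega)
    rw [hph] at hh'; rw [hpl] at hl'
    cases hh'; cases hl'
    have := chain'_getElem hchB (t := nB - 2) (by omega)
    have e : nB - 2 + 1 = nB - 1 := by omega
    rw [gidx qB e, hqBl] at this
    exact this
  · -- chords
    intro m n a' b' hmn hnp hnwrap ha' hb'
    rw [hplen] at hnp
    obtain ⟨hm', ha''⟩ := List.getElem?_eq_some_iff.1 ha'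
    obtain ⟨hn', hb''⟩ := List.getElem?_eq_some_iff.1 hb'
    subst ha''; subst hb''
    rw [hplen] at hnwrap
    rcases Nat.lt_or_ge n nA with hn2 | hn2
    · -- both in qA
      rw [hpgetA m (by omega), hpgetA n (by omega)]
      by_cases hcase : m = 0 ∧ n = nA - 1
      · obtain ⟨rfl, rfl⟩ := hcase
        rw [hqA0, gidx qA (rfl : nA - 1 = nA - 1), hqAl]
        exact hna
      · exact hcdA m n (by omega) (by omega) hmn hcase
    · rcases Nat.lt_or_ge m nA with hm2 | hm2
      · -- cross
        rw [hpgetA m (by omega), hpgetB n hn2 (by omega)]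
        have hyB : qB[n - nA + 1]'(by omega) ∈ compo adj T b :=
          hmemB _ (by omega) (by omega)
        rcases Nat.eq_zero_or_pos m with rfl | hmp
        · -- m = 0 : p[m] = c = qB[nB-1]
          rw [hqA0]
          have hxx := hcdB (n - nA + 1) (nB - 1) (by omega) (by omega)
            (by omega) (by omega)
          rw [hqBl] at hxx
          exact fun h => hxx (hsym _ _ h)
        rcases Nat.lt_or_ge m (nA - 1) with hml | hml
        · have hyA : qA[m]'(by omega) ∈ compo adj T a := hmemA _ hmp (by omega)
          exact fun h => compo_no_cross hsym hnreach hyA hyB h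
        · have : m = nA - 1 := by omega
          subst this
          rw [gidx qA (rfl : nA - 1 = nA - 1), hqAl]
          have hxx := hcdB 0 (n - nA + 1) (by omega) (by omega)
            (by omega) (by omega)
          rw [hqB0] at hxx
          exact hxx
      · -- both in qB
        rw [hpgetB m hm2 (by omega), hpgetB n hn2 (by omega)]
        exact hcdB (m - nA + 1) (n - nA + 1) (by omega) (by omega)
          (by omega) (by omega)

end Chordal3
section Chordal4

open MixedGraph

variable {V : Type*} {adj : V → V → Prop}

lemma cross_lemma (hirr : ∀ i, ¬ adj i i) {T : Set V} {c a b : V}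
    (ha : a ∈ T) (hbc : b ≠ c)
    (hr : reachIn adj (T ∪ {c}) a b) (hnr : ¬ reachIn adj T a b) :
    (∃ u, u ∈ T ∧ reachIn adj T a u ∧ adj u c) ∧
    (∃ w, w ∈ T ∧ adj c w ∧ reachIn adj T w b) := by
  have main : ∀ x, reachIn adj (T ∪ {c}) a x →
      (x ∈ T ∧ reachIn adj T a x) ∨
      ((∃ u, u ∈ T ∧ reachIn adj T a u ∧ adj u c) ∧
        (x = c ∨ (x ∈ T ∧ ∃ w, w ∈ T ∧ adj c w ∧ reachIn adj T w x))) := by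
    intro x hx
    induction hx with
    | refl => exact Or.inl ⟨ha, .refl⟩
    | @tail y z hy step ih =>
      obtain ⟨hyT', hzT', hadj⟩ := step
      rcases ih with ⟨hyT, hray⟩ | ⟨hu, hrest⟩
      · rcases hzT' with hzT | hzc
        · exact Or.inl ⟨hzT, hray.tail ⟨hyT, hzT, hadj⟩⟩
        · rw [Set.mem_singleton_iff] at hzc
          subst hzc
          exact Or.inr ⟨⟨y, hyT, hray, hadj⟩, Or.inl rfl⟩
      · rcases hrest with rfl | ⟨hyT, w, hwT, hcw, hrwy⟩
        · rcases hzT' with hzT | hzc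
          · exact Or.inr ⟨hu, Or.inr ⟨hzT, z, hzT, hadj, .refl⟩⟩
          · rw [Set.mem_singleton_iff] at hzc
            subst hzc
            exact absurd hadj (hirr _)
        · rcases hzT' with hzT | hzc
          · exact Or.inr ⟨hu, Or.inr
              ⟨hzT, w, hwT, hcw, hrwy.tail ⟨hyT, hzT, hadj⟩⟩⟩
          · rw [Set.mem_singleton_iff] at hzc
            subst hzc
            exact Or.inr ⟨hu, Or.inl rfl⟩
  rcases main b hr with ⟨_, hrab⟩ | ⟨hu, hrest⟩
  · exact absurd hrab hnr
  rcases hrest with rfl | ⟨_, w, hwT, hcw, hrwb⟩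
  · exact absurd rfl hbc
  · exact ⟨hu, w, hwT, hcw, hrwb⟩

/-- `v` is simplicial within `s`. -/
def simplicialIn (adj : V → V → Prop) (s : Finset V) (v : V) : Prop :=
  ∀ x ∈ s, ∀ y ∈ s, adj x v → adj y v → x ≠ y → adj x y

theorem dirac_pair (hsym : ∀ i j, adj i j → adj j i) (hirr : ∀ i, ¬ adj i i)
    (hchord : chordalRel adj) :
    ∀ (n : ℕ) (s : Finset V), s.card ≤ n → ∀ a b, a ∈ s → b ∈ s → a ≠ b →
      ¬ adj a b →
      ∃ v ∈ s, ∃ w ∈ s, v ≠ w ∧ ¬ adj v w ∧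
        simplicialIn adj s v ∧ simplicialIn adj s w := by
  intro n
  induction n with
  | zero =>
    intro s h a b ha _ _ _
    exact absurd (Finset.card_pos.2 ⟨a, ha⟩) (by omega)
  | succ n IH =>
    intro s hcard a b ha hb hab hnadj
    classical
    set Sep : Finset V → Prop := fun S => (↑S : Set V) ⊆ ↑s ∧ a ∉ S ∧ b ∉ S ∧
      ¬ reachIn adj {x | x ∈ s ∧ x ∉ S} a b with hSepDef
    have hex : ∃ nn, ∃ S, Sep S ∧ S.card = nn := by
      refine ⟨_, (s.erase a).erase b, ⟨?_, ?_, ?_, ?_⟩, rfl⟩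
      · intro x hx
        simp only [Finset.coe_erase, Set.mem_diff, Finset.mem_coe] at hx ⊢
        exact hx.1.1
      · simp [hab]
      · simp
      · intro hreach
        rcases Relation.ReflTransGen.cases_head hreach with heq | ⟨c, hstep, _⟩
        · exact hab heq
        · obtain ⟨_, hcT, hadj⟩ := hstep
          have hcs : c ∈ s := hcT.1
          have h2 : c ∉ (s.erase a).erase b := hcT.2
          by_cases hca : c = a
          · subst hca; exact hirr _ hadj
          by_cases hcb : c = b
          · subst hcb; exact hnadj hadj
          · exact h2 (Finset.mem_erase.2 ⟨hcb, Finset.mem_erase.2 ⟨hca, hcs⟩⟩)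
    obtain ⟨S, ⟨hSsub, haS, hbS, hSsep⟩, hScard⟩ := Nat.find_spec hex
    have hSmin : ∀ S', Sep S' → Nat.find hex ≤ S'.card :=
      fun S' h => Nat.find_min' hex ⟨S', h, rfl⟩
    set T : Set V := {x | x ∈ s ∧ x ∉ S} with hT
    have haT : a ∈ T := ⟨ha, haS⟩
    have hbT : b ∈ T := ⟨hb, hbS⟩
    have hnbr : ∀ c ∈ S, (∃ u ∈ compo adj T a, adj u c) ∧
        (∃ w ∈ compo adj T b, adj c w) := by
      intro c hcS
      have hcs : c ∈ s := hSsub hcS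
      have hTc : {x | x ∈ s ∧ x ∉ S.erase c} = T ∪ {c} := by
        ext x
        constructor
        · rintro ⟨hxs, hxe⟩
          by_cases hxc : x = c
          · exact Or.inr hxc
          · exact Or.inl ⟨hxs, fun hxS => hxe (Finset.mem_erase.2 ⟨hxc, hxS⟩)⟩
        · rintro (⟨hxs, hxS⟩ | hxc)
          · exact ⟨hxs, fun h => hxS (Finset.mem_of_mem_erase h)⟩
          · rw [Set.mem_singleton_iff] at hxc
            subst hxc
            exact ⟨hcs, fun h => (Finset.mem_erase.1 h).1 rfl⟩
      have hfail : ¬ Sep (S.erase c) := by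
        intro hS'
        have h1 := hSmin _ hS'
        have hlt : (S.erase c).card < S.card := Finset.card_erase_lt_of_mem hcS
        omega
      have hreach' : reachIn adj (T ∪ {c}) a b := by
        by_contra hno
        refine hfail ⟨?_, ?_, ?_, ?_⟩
        · intro x hx
          exact hSsub (Finset.mem_coe.2 (Finset.mem_of_mem_erase (Finset.mem_coe.1 hx)))
        · intro h; exact haS (Finset.mem_of_mem_erase h)
        · intro h; exact hbS (Finset.mem_of_mem_erase h)
        · rw [hTc]; exact hno
      have hbc : b ≠ c := fun e => hbS (e ▸ hcS)
      obtain ⟨⟨u, huT, hrau, hadjuc⟩, ⟨w, hwT, hadjcw, hrwb⟩⟩ :=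
        cross_lemma hirr haT hbc hreach' hSsep
      exact ⟨⟨u, ⟨huT, hrau⟩, hadjuc⟩, ⟨w, ⟨hwT, reachIn_symm hsym hrwb⟩, hadjcw⟩⟩
    have hSnotT : ∀ c ∈ S, c ∉ T := fun c hc hcT => hcT.2 hc
    have hSclique := sep_clique hsym hchord hSsep hnbr hSnotT
    have side : ∀ r o : V, r ∈ T → o ∈ s → o ∉ S → o ∉ compo adj T r →
        ∃ v ∈ compo adj T r, simplicialIn adj s v := by
      intro r o hrT hos hoS honc
      set Afin : Finset V := s.filter (fun x => x ∈ compo adj T r) with hAfin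
      set s' : Finset V := Afin ∪ S with hs'
      have hsub' : s' ⊆ s := by
        intro x hx
        rcases Finset.mem_union.1 hx with hx | hx
        · exact (Finset.mem_filter.1 hx).1
        · exact hSsub hx
      have hos' : o ∉ s' := by
        intro hx
        rcases Finset.mem_union.1 hx with hx | hx
        · exact honc (Finset.mem_filter.1 hx).2
        · exact hoS hx
      have hcard' : s'.card ≤ n := by
        have h1 : s'.card < s.card := Finset.card_lt_card
          ⟨hsub', fun hcon => hos' (hcon hos)⟩
        omega
      have hclosed : ∀ v, v ∈ compo adj T r → ∀ x ∈ s, adj x v → x ∈ s' := by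
        intro v hv x hxs hadjxv
        by_cases hxS : x ∈ S
        · exact Finset.mem_union.2 (Or.inr hxS)
        · have hxT : x ∈ T := ⟨hxs, hxS⟩
          have : x ∈ compo adj T r := compo_closed hv hxT (hsym _ _ hadjxv)
          exact Finset.mem_union.2 (Or.inl (Finset.mem_filter.2 ⟨hxs, this⟩))
      by_cases hclq : ∀ x ∈ s', ∀ y ∈ s', x ≠ y → adj x y
      · refine ⟨r, mem_compo_self hrT, ?_⟩
        intro x hxs y hys hxv hyv hxy
        exact hclq x (hclosed r (mem_compo_self hrT) x hxs hxv) y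
          (hclosed r (mem_compo_self hrT) y hys hyv) hxy
      · push_neg at hclq
        obtain ⟨x0, hx0, y0, hy0, hxy0, hnadj0⟩ := hclq
        obtain ⟨v, hvs', w, hws', hvw, hnavw, hsimv, hsimw⟩ :=
          IH s' hcard' x0 y0 hx0 hy0 hxy0 hnadj0
        have hpick : ∃ z, z ∈ compo adj T r ∧ simplicialIn adj s' z := by
          rcases Finset.mem_union.1 hvs' with hvv | hvv
          · exact ⟨v, (Finset.mem_filter.1 hvv).2, hsimv⟩
          · rcases Finset.mem_union.1 hws' with hww | hww
            · exact ⟨w, (Finset.mem_filter.1 hww).2, hsimw⟩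
            · exact absurd (hSclique v hvv w hww hvw) hnavw
        obtain ⟨z, hzc, hsimz⟩ := hpick
        refine ⟨z, hzc, ?_⟩
        intro x hxs y hys hxz hyz hxy
        exact hsimz x (hclosed z hzc x hxs hxz) y (hclosed z hzc y hys hyz)
          hxz hyz hxy
    have hbnc : b ∉ compo adj T a := fun h => hSsep h.2
    have hanc : a ∉ compo adj T b :=
      fun h => hSsep (reachIn_symm hsym h.2)
    obtain ⟨vA, hvA, hsimA⟩ := side a b haT hb hbS hbnc
    obtain ⟨vB, hvB, hsimB⟩ := side b a hbT ha haS hanc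
    refine ⟨vA, (compo_subset hvA).1, vB, (compo_subset hvB).1, ?_, ?_, hsimA, hsimB⟩
    · intro e
      exact compo_disjoint hsym hSsep hvA (e ▸ hvB)
    · intro h
      exact compo_no_cross hsym hSsep hvA hvB h

theorem dirac_simplicial (hsym : ∀ i j, adj i j → adj j i)
    (hirr : ∀ i, ¬ adj i i) (hchord : chordalRel adj)
    (s : Finset V) (hs : s.Nonempty) :
    ∃ v ∈ s, simplicialIn adj s v := by
  classical
  by_cases hclq : ∀ x ∈ s, ∀ y ∈ s, x ≠ y → adj x y
  · obtain ⟨v, hv⟩ := hs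
    exact ⟨v, hv, fun x hx y hy _ _ hxy => hclq x hx y hy hxy⟩
  · push_neg at hclq
    obtain ⟨x0, hx0, y0, hy0, hxy0, hnadj0⟩ := hclq
    obtain ⟨v, hv, _, _, _, _, hsim, _⟩ :=
      dirac_pair hsym hirr hchord s.card s le_rfl x0 y0 hx0 hy0 hxy0 hnadj0
    exact ⟨v, hv, hsim⟩

theorem peo_exists [Fintype V] (hsym : ∀ i j, adj i j → adj j i)
    (hirr : ∀ i, ¬ adj i i) (hchord : chordalRel adj) :
    ∃ f : V → ℕ, Function.Injective f ∧ ∀ x y z, adj x z → adj y z →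
      f x < f z → f y < f z → x ≠ y → adj x y := by
  classical
  have main : ∀ (n : ℕ) (s : Finset V), s.card ≤ n →
      ∃ f : V → ℕ, (∀ x ∈ s, f x < s.card) ∧ Set.InjOn f ↑s ∧
        (∀ x ∉ s, f x = s.card) ∧
        ∀ z ∈ s, ∀ x ∈ s, ∀ y ∈ s, adj x z → adj y z → f x < f z → f y < f z →
          x ≠ y → adj x y := by
    intro n
    induction n with
    | zero =>
      intro s hs
      have : s = ∅ := Finset.card_eq_zero.1 (by omega)
      subst this
      exact ⟨fun _ => 0, by simp, by simp, by simp, by simp⟩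
    | succ n IH =>
      intro s hs
      rcases Finset.eq_empty_or_nonempty s with rfl | hne
      · exact ⟨fun _ => 0, by simp, by simp, by simp, by simp⟩
      obtain ⟨v, hv, hsim⟩ := dirac_simplicial hsym hirr hchord s hne
      have hcards : 1 ≤ s.card := Finset.card_pos.2 ⟨v, hv⟩
      have hcard' : (s.erase v).card = s.card - 1 := Finset.card_erase_of_mem hv
      obtain ⟨f', hbound, hinj, hout, hQ⟩ := IH (s.erase v) (by omega)
      refine ⟨fun x => if x ∈ s then (if x = v then s.card - 1 else f' x)
        else s.card, ?_, ?_, ?_, ?_⟩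
      · intro x hx
        simp only [if_pos hx]
        by_cases hxv : x = v
        · simp only [if_pos hxv]; omega
        · simp only [if_neg hxv]
          have := hbound x (Finset.mem_erase.2 ⟨hxv, hx⟩)
          omega
      · intro x hx y hy he
        simp only [Finset.mem_coe] at hx hy
        simp only [if_pos hx, if_pos hy] at he
        by_cases hxv : x = v <;> by_cases hyv : y = v
        · rw [hxv, hyv]
        · simp only [if_pos hxv, if_neg hyv] at he
          have := hbound y (Finset.mem_erase.2 ⟨hyv, hy⟩)
          omega
        · simp only [if_neg hxv, if_pos hyv] at he
          have := hbound x (Finset.mem_erase.2 ⟨hxv, hx⟩)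
          omega
        · simp only [if_neg hxv, if_neg hyv] at he
          exact hinj (Finset.mem_coe.2 (Finset.mem_erase.2 ⟨hxv, hx⟩))
            (Finset.mem_coe.2 (Finset.mem_erase.2 ⟨hyv, hy⟩)) he
      · intro x hx
        simp only [if_neg hx]
      · intro z hz x hx y hy hxz hyz hfx hfy hxy
        simp only [if_pos hz, if_pos hx, if_pos hy] at hfx hfy
        by_cases hzv : z = v
        · subst hzv
          exact hsim x hx y hy hxz hyz hxy
        · simp only [if_neg hzv] at hfx hfy
          have hzc := hbound z (Finset.mem_erase.2 ⟨hzv, hz⟩)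
          have hxv : x ≠ v := by
            intro e
            rw [if_pos e] at hfx
            omega
          have hyv : y ≠ v := by
            intro e
            rw [if_pos e] at hfy
            omega
          rw [if_neg hxv] at hfx
          rw [if_neg hyv] at hfy
          exact hQ z (Finset.mem_erase.2 ⟨hzv, hz⟩) x (Finset.mem_erase.2 ⟨hxv, hx⟩)
            y (Finset.mem_erase.2 ⟨hyv, hy⟩) hxz hyz hfx hfy hxy
  obtain ⟨f, _, hinj, _, hQ⟩ := main (Finset.univ : Finset V).card Finset.univ le_rfl
  refine ⟨f, ?_, ?_⟩
  · intro x y he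
    exact hinj (by simp) (by simp) he
  · intro x y z hxz hyz hfx hfy hxy
    exact hQ z (Finset.mem_univ z) x (Finset.mem_univ x) y (Finset.mem_univ y)
      hxz hyz hfx hfy hxy

end Chordal4
/-- An undirected graph is Markov equivalent to some DAG iff it is chordal. -/
theorem ug_equiv_some_dag_iff_chordal {V : Type*} [Fintype V] (G : MixedGraph V)
    (hG : G.isUG) :
    (∃ D : MixedGraph V, D.isDAG ∧ G.markovEquiv D) ↔ chordalRel G.adj := by
  constructor
  · rintro ⟨D, hD, heq⟩
    exact chordal_of_equiv G D hG hD heq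
  · intro hch
    obtain ⟨f, hinj, hpeo⟩ := peo_exists (adj := G.adj)
      (fun i j h => G.adj_symm' h) G.adj_irrefl' hch
    exact MixedGraph.equiv_dag_of_peo hG f hinj hpeo
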